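/- With α = 1/2, φ₁(x) = (1/4) sin(x/2) and φ₂(x) = (1/12) sin(x/2) − (3/32) sin(3x/2), the identity (α+2)² φ₂(x) + φ₂''(x) = −[(α+2)(α+1) cos(x) φ₁(x) − sin(x) φ₁'(x) + cos(x) φ₁''(x)] holds for all real x, and φ₂'(−π) = φ₂'(π) = 0. -/

import Mathlib

open Real

noncomputable def phi011 : ℝ → ℝ := fun x => (1/4) * Real.sin (x/2)
noncomputable def phi012 : ℝ → ℝ := fun x => (1/12) * Real.sin (x/2) - (3/32) * Real.sin (3*x/2)

lemma hs2 (x : ℝ) : HasDerivAt (fun x : ℝ => Real.sin (x/2)) (Real.cos (x/2) * (1/2)) x :=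
  by have := (Real.hasDerivAt_sin (x/2)).comp x ((hasDerivAt_id x).div_const 2); exact this

lemma hc2 (x : ℝ) : HasDerivAt (fun x : ℝ => Real.cos (x/2)) (-Real.sin (x/2) * (1/2)) x :=
  by have := (Real.hasDerivAt_cos (x/2)).comp x ((hasDerivAt_id x).div_const 2); exact this

lemma hs32 (x : ℝ) : HasDerivAt (fun x : ℝ => Real.sin (3*x/2)) (Real.cos (3*x/2) * (3/2)) x := by
  have h : HasDerivAt (fun x : ℝ => 3*x/2) (3/2) x := by
    have := ((hasDerivAt_id x).const_mul 3).div_const 2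
    simpa using this
  exact (Real.hasDerivAt_sin (3*x/2)).comp x h

lemma hc32 (x : ℝ) : HasDerivAt (fun x : ℝ => Real.cos (3*x/2)) (-Real.sin (3*x/2) * (3/2)) x := by
  have h : HasDerivAt (fun x : ℝ => 3*x/2) (3/2) x := by
    have := ((hasDerivAt_id x).const_mul 3).div_const 2
    simpa using this
  exact (Real.hasDerivAt_cos (3*x/2)).comp x h

lemma d1 : deriv phi011 = fun x => (1/8) * Real.cos (x/2) := by
  funext x
  have : HasDerivAt phi011 ((1/8) * Real.cos (x/2)) x := by
    have := (hs2 x).const_mul (1/4 : ℝ)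
    exact this.congr_deriv (by ring)
  exact this.deriv

lemma dd1 : deriv (deriv phi011) = fun x => -(1/16) * Real.sin (x/2) := by
  rw [d1]; funext x
  have : HasDerivAt (fun x => (1/8) * Real.cos (x/2)) (-(1/16) * Real.sin (x/2)) x := by
    have := (hc2 x).const_mul (1/8 : ℝ)
    exact this.congr_deriv (by ring)
  exact this.deriv

lemma d2 : deriv phi012 = fun x => (1/24) * Real.cos (x/2) - (9/64) * Real.cos (3*x/2) := by
  funext x
  have : HasDerivAt phi012 ((1/24) * Real.cos (x/2) - (9/64) * Real.cos (3*x/2)) x := by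
    have := ((hs2 x).const_mul (1/12 : ℝ)).sub ((hs32 x).const_mul (3/32 : ℝ))
    exact this.congr_deriv (by ring)
  exact this.deriv

lemma dd2 : deriv (deriv phi012) = fun x => -(1/48) * Real.sin (x/2) + (27/128) * Real.sin (3*x/2) := by
  rw [d2]; funext x
  have : HasDerivAt (fun x => (1/24) * Real.cos (x/2) - (9/64) * Real.cos (3*x/2))
      (-(1/48) * Real.sin (x/2) + (27/128) * Real.sin (3*x/2)) x := by
    have := ((hc2 x).const_mul (1/24 : ℝ)).sub ((hc32 x).const_mul (9/64 : ℝ))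
    exact this.congr_deriv (by ring)
  exact this.deriv

theorem crack_second_shadow_j1 :
    (∀ x : ℝ, ((1/2 : ℝ) + 2)^2 * phi012 x + deriv (deriv phi012) x =
      -(((1/2 : ℝ) + 2) * ((1/2 : ℝ) + 1) * Real.cos x * phi011 x
        - Real.sin x * deriv phi011 x + Real.cos x * deriv (deriv phi011) x)) ∧
    deriv phi012 (-π) = 0 ∧ deriv phi012 π = 0 := by
  refine ⟨fun x => ?_, ?_, ?_⟩
  · rw [dd1, dd2, d1]
    simp only [phi011, phi012]
    have hsc := Real.sin_sq_add_cos_sq (x/2)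
    have hS : Real.sin (3*x/2) = 3 * Real.sin (x/2) - 4 * Real.sin (x/2)^3 := by
      have := Real.sin_three_mul (x/2)
      rw [show (3*(x/2) : ℝ) = 3*x/2 by ring] at this
      linarith
    have hsin : Real.sin x = 2 * Real.sin (x/2) * Real.cos (x/2) := by
      have := Real.sin_two_mul (x/2)
      rw [show (2*(x/2) : ℝ) = x by ring] at this
      linarith
    have hcos : Real.cos x = 1 - 2 * Real.sin (x/2)^2 := by
      have := Real.cos_two_mul (x/2)
      rw [show (2*(x/2) : ℝ) = x by ring] at this
      nlinarith
    rw [hS, hsin, hcos]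
    linear_combination (-(1/4)) * Real.sin (x/2) * hsc
  · rw [d2]
    simp only
    rw [show ((-π)/2 : ℝ) = -(π/2) by ring, show ((3:ℝ)*(-π)/2) = -(π + π/2) by ring,
      Real.cos_neg, Real.cos_neg, Real.cos_add, Real.cos_pi_div_two]
    simp
  · rw [d2]
    simp only
    rw [Real.cos_pi_div_two, show (3*π/2 : ℝ) = π + π/2 by ring, Real.cos_add, Real.cos_pi_div_two]
    simp
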